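/- arXiv:2201.10287 — 4 statements merged into one kernel-verified Lean document; each statement's English description precedes it below -/
import Mathlib

section
/- If a category C has finite coproducts and colimits of all ω-chains, and an endofunctor Σ : C → C preserves colimits of ω-chains, then the forgetful functor from the category of Σ-algebras to C has a left adjoint. -/
open CategoryTheory CategoryTheory.Limits

universe v u

namespace FreeAlgAux

variable {C : Type u} [Category.{v} C]
    [HasFiniteCoproducts C] [HasColimitsOfShape ℕ C]
    (F : C ⥤ C) [PreservesColimitsOfShape ℕ F] (X : C)

/-- The objects of the free-algebra chain. -/
noncomputable def W : ℕ → C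
  | 0 => X
  | n + 1 => X ⨿ F.obj (W n)

/-- The connecting maps of the chain. -/
noncomputable def w : ∀ n, W F X n ⟶ W F X (n + 1)
  | 0 => coprod.inl
  | n + 1 => coprod.map (𝟙 X) (F.map (w n))

/-- The chain as a functor `ℕ ⥤ C`. -/
noncomputable def chain : ℕ ⥤ C := Functor.ofSequence (w F X)

/-- The colimit of the chain. -/
noncomputable def A : C := colimit (chain F X)

/-- The colimit injections. -/
noncomputable def ι (n : ℕ) : W F X n ⟶ A F X := colimit.ι (chain F X) n

lemma w_ι (n : ℕ) : w F X n ≫ ι F X (n + 1) = ι F X n := by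
  have := colimit.w (chain F X) (homOfLE (n.le_add_right 1))
  simp only [chain, ι, Functor.ofSequence_map_homOfLE_succ] at this
  exact this

/-- The cocone exhibiting `A` as a cocone over `chain ⋙ F`. -/
noncomputable def strCocone : Cocone (chain F X ⋙ F) where
  pt := A F X
  ι := NatTrans.ofSequence (F := chain F X ⋙ F) (G := (Functor.const ℕ).obj (A F X))
    (fun n => coprod.inr ≫ ι F X (n + 1)) (by
      intro n
      have h1 : (chain F X ⋙ F).map (homOfLE (n.le_add_right 1)) = F.map (w F X n) := by
        simp [chain]
        rfl
      rw [h1]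
      have h2 : (coprod.inr : F.obj (W F X n) ⟶ W F X (n + 1)) ≫ w F X (n + 1)
          = F.map (w F X n) ≫ coprod.inr := by
        show coprod.inr ≫ coprod.map (𝟙 X) (F.map (w F X n)) = _
        simp
      show F.map (w F X n) ≫ coprod.inr ≫ ι F X (n + 2) =
        (coprod.inr ≫ ι F X (n + 1)) ≫ 𝟙 (A F X)
      simp only [Category.comp_id, ← w_ι F X (n + 1)]
      exact (Category.assoc _ _ _).symm.trans ((congrArg (fun h => h ≫ ι F X (n + 2)) h2.symm).trans (Category.assoc _ _ _)))

/-- `F` applied to the colimit cocone is a colimit. -/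
noncomputable def mapIsColimit : IsColimit (F.mapCocone (colimit.cocone (chain F X))) :=
  isColimitOfPreserves F (colimit.isColimit (chain F X))

/-- The algebra structure map on `A`. -/
noncomputable def str : F.obj (A F X) ⟶ A F X :=
  (mapIsColimit F X).desc (strCocone F X)

lemma str_fac (n : ℕ) :
    F.map (ι F X n) ≫ str F X = coprod.inr ≫ ι F X (n + 1) :=
  (mapIsColimit F X).fac (strCocone F X) n

/-- The free algebra on `X`. -/
noncomputable def freeAlg : Endofunctor.Algebra F := ⟨A F X, str F X⟩

/-- The unit map. -/
noncomputable def unit : X ⟶ A F X := ι F X 0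

lemma inl_ι (n : ℕ) :
    (coprod.inl : X ⟶ W F X (n + 1)) ≫ ι F X (n + 1) = ι F X 0 := by
  induction n with
  | zero => exact w_ι F X 0
  | succ n ih =>
    have h2 : (coprod.inl : X ⟶ W F X (n + 2)) = coprod.inl ≫ w F X (n + 1) := by
      show _ = (coprod.inl : X ⟶ W F X (n + 1)) ≫ coprod.map (𝟙 X) (F.map (w F X n))
      simp
    rw [h2]; exact (Category.assoc _ _ _).trans ((congrArg (fun h => (coprod.inl : X ⟶ W F X (n + 1)) ≫ h) (w_ι F X (n + 1))).trans ih)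

section Desc

variable {B : Endofunctor.Algebra F} (f : X ⟶ B.a)

/-- The maps from the chain to any algebra `B` with a map `f : X ⟶ B.a`. -/
noncomputable def descW : ∀ n, W F X n ⟶ B.a
  | 0 => f
  | n + 1 => coprod.desc f (F.map (descW n) ≫ B.str)

lemma w_descW (n : ℕ) : w F X n ≫ descW F X f (n + 1) = descW F X f n := by
  induction n with
  | zero =>
    show coprod.inl ≫ coprod.desc f (F.map (descW F X f 0) ≫ B.str) = descW F X f 0
    rw [coprod.inl_desc]
    rfl
  | succ n ih =>
    show coprod.map (𝟙 X) (F.map (w F X n)) ≫ coprod.desc f (F.map (descW F X f (n+1)) ≫ B.str)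
      = coprod.desc f (F.map (descW F X f n) ≫ B.str)
    ext
    · simp; exact (coprod.inl_desc _ _).trans (coprod.inl_desc _ _).symm
    · simp only [coprod.map_desc, coprod.inr_desc]
      rw [← Functor.map_comp_assoc, ih]

/-- The cocone over the chain with apex `B.a`. -/
noncomputable def descCocone : Cocone (chain F X) where
  pt := B.a
  ι := NatTrans.ofSequence (F := chain F X) (G := (Functor.const ℕ).obj B.a)
    (descW F X f) (by
      intro n
      have h1 : (chain F X).map (homOfLE (n.le_add_right 1)) = w F X n := by simp [chain]; rfl
      rw [h1]
      exact (w_descW F X f n).trans (Category.comp_id _).symm)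

/-- The induced map out of the colimit. -/
noncomputable def desc : A F X ⟶ B.a := colimit.desc (chain F X) (descCocone F X f)

lemma ι_desc (n : ℕ) : ι F X n ≫ desc F X f = descW F X f n :=
  colimit.ι_desc (descCocone F X f) n

lemma desc_str : F.map (desc F X f) ≫ B.str = str F X ≫ desc F X f := by
  apply (mapIsColimit F X).hom_ext
  intro n
  have h1 : (F.mapCocone (colimit.cocone (chain F X))).ι.app n = F.map (ι F X n) := rfl
  rw [h1]
  show F.map (ι F X n) ≫ F.map (desc F X f) ≫ B.str = F.map (ι F X n) ≫ str F X ≫ desc F X f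
  rw [← Functor.map_comp_assoc, ι_desc]
  rw [reassoc_of% (str_fac F X n)]
  exact ((coprod.inr_desc _ _).symm).trans (congrArg (fun h => (coprod.inr : F.obj (W F X n) ⟶ W F X (n + 1)) ≫ h) (ι_desc F X f (n + 1))).symm |>.trans (Category.assoc _ _ _).symm

/-- The induced algebra morphism. -/
noncomputable def descHom : freeAlg F X ⟶ B := ⟨desc F X f, desc_str F X f⟩

lemma unit_desc : unit F X ≫ desc F X f = f := ι_desc F X f 0

lemma desc_unique (g : freeAlg F X ⟶ B) (hg : unit F X ≫ g.f = f) : g = descHom F X f := by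
  apply Endofunctor.Algebra.Hom.ext
  apply colimit.hom_ext
  intro n
  show ι F X n ≫ g.f = ι F X n ≫ desc F X f
  rw [ι_desc]
  induction n with
  | zero => exact hg
  | succ n ih =>
    have hinr : coprod.inr ≫ ι F X (n + 1) ≫ g.f = F.map (descW F X f n) ≫ B.str := by
      refine (((reassoc_of% (str_fac F X n)) g.f).trans (Category.assoc _ _ _)).symm.trans ?_
      have := g.h
      show F.map (ι F X n) ≫ str F X ≫ g.f = _
      rw [show str F X ≫ g.f = F.map g.f ≫ B.str from g.h.symm]
      exact (F.map_comp_assoc _ _ _).symm.trans (congrArg (fun h => F.map h ≫ B.str) ih)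
    show ι F X (n+1) ≫ g.f = coprod.desc f (F.map (descW F X f n) ≫ B.str)
    apply coprod.hom_ext
    · exact (Category.assoc _ _ _).symm.trans <| ((reassoc_of% (inl_ι F X n)) g.f).trans (hg.trans (coprod.inl_desc _ _).symm)
    · exact hinr.trans (coprod.inr_desc _ _).symm

end Desc

end FreeAlgAux

/-- If a category `C` has finite coproducts and colimits of all ω-chains, and an
endofunctor `Σ : C ⥤ C` preserves colimits of ω-chains, then the forgetful functor
from the category of `Σ`-algebras to `C` has a left adjoint. -/
theorem free_algebras_exist {C : Type u} [Category.{v} C]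
    [HasFiniteCoproducts C] [HasColimitsOfShape ℕ C]
    (F : C ⥤ C) [PreservesColimitsOfShape ℕ F] :
    (Endofunctor.Algebra.forget F).IsRightAdjoint := by
  haveI : ∀ X : C, HasInitial (StructuredArrow X (Endofunctor.Algebra.forget F)) := by
    intro X
    apply IsInitial.hasInitial (X := StructuredArrow.mk
      (Y := FreeAlgAux.freeAlg F X) (FreeAlgAux.unit F X))
    apply IsInitial.ofUniqueHom
      (fun Y => StructuredArrow.homMk (FreeAlgAux.descHom F X Y.hom)
        (FreeAlgAux.unit_desc F X Y.hom))
    intro Y m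
    ext1
    exact FreeAlgAux.desc_unique F X Y.hom m.right (by exact m.w)
  exact isRightAdjointOfStructuredArrowInitials _
end

section
/- Characterization of free functorial algebras: the free Fn-algebra on (H, X) in Endo_f(C) × C is carried by (G* H, (I_{G* H})* X), with structure maps given by the structure maps of the free G-algebra on H and of the free I_{G* H}-algebra on X respectively; i.e., Free_Fn is naturally isomorphic to the functor (H, X) ↦ ⟨G* H, (I_{G* H})* X, op^{G*}_H, op^{(I_{G* H})*}_X⟩. -/
open CategoryTheory CategoryTheory.Limits

universe v u

/-- An object `X` is finitely presentable if `Hom(X, -)` preserves filtered colimits. -/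
def IsFinitelyPresentable {C : Type u} [Category.{v} C] (X : C) : Prop :=
  Nonempty (PreservesFilteredColimits (coyoneda.obj (Opposite.op X)))

/-- A category is locally finitely presentable if it is cocomplete and has a (small)
family of finitely presentable objects such that every object is a filtered colimit
of objects of the family. -/
class LocallyFinitelyPresentable (C : Type u) [Category.{v} C] : Prop where
  hasColimits : HasColimits C
  exists_generators :
    ∃ (ι : Type v) (gen : ι → C), (∀ i, _root_.IsFinitelyPresentable (gen i)) ∧
      ∀ X : C, ∃ (J : Type v) (_ : SmallCategory J) (_ : IsFiltered J)
        (D : J ⥤ C) (c : Cocone D),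
          Nonempty (IsColimit c) ∧ c.pt = X ∧ ∀ j : J, ∃ i : ι, D.obj j = gen i

instance (priority := 100) LocallyFinitelyPresentable.toHasColimits
    {C : Type u} [Category.{v} C] [LocallyFinitelyPresentable C] : HasColimits C :=
  LocallyFinitelyPresentable.hasColimits

variable {C : Type u} [Category.{v} C]

/-- The object part of the grammar functor `G H = Id + Σ∘H + Γ∘H∘H`. -/
noncomputable def Gobj [HasColimits C] (Sg Gg H : C ⥤ C) : C ⥤ C :=
  𝟭 C ⨿ ((H ⋙ Sg) ⨿ (H ⋙ H ⋙ Gg))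

/-- The morphism part of the grammar functor `G`. -/
noncomputable def Gmap [HasColimits C] (Sg Gg : C ⥤ C) {H K : C ⥤ C} (h : H ⟶ K) :
    Gobj Sg Gg H ⟶ Gobj Sg Gg K :=
  coprod.map (𝟙 (𝟭 C)) (coprod.map (Functor.whiskerRight h Sg) (Functor.whiskerRight (h ◫ h) Gg))

/-- A functorial algebra for signatures `Σ` (here `Sg`) and `Γ` (here `Gg`): a
finitary endofunctor carrier `H` with a `G`-algebra structure, together with a base
carrier `X` with an `I_H`-algebra structure `Σ X + Γ (H X) ⟶ X`. -/
structure FnAlg [HasColimits C] (Sg Gg : C ⥤ C) where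
  H : C ⥤ C
  fin : Nonempty (PreservesFilteredColimits H)
  X : C
  algG : Gobj Sg Gg H ⟶ H
  algI : Sg.obj X ⨿ Gg.obj (H.obj X) ⟶ X

/-- A morphism of functorial algebras. -/
structure FnAlgHom [HasColimits C] (Sg Gg : C ⥤ C) (A B : FnAlg Sg Gg) where
  σ : A.H ⟶ B.H
  f : A.X ⟶ B.X
  commG : A.algG ≫ σ = Gmap Sg Gg σ ≫ B.algG
  commI : A.algI ≫ f =
    coprod.map (Sg.map f) (Gg.map (σ.app A.X ≫ B.H.map f)) ≫ B.algI

/-- Characterization of free functorial algebras: the free `Fn`-algebra on `(H, X)`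
is carried by `(G* H, (I_{G* H})* X)` with structure maps those of the free
`G`-algebra on `H` and of the free `I_{G* H}`-algebra on `X`: given the free
`G`-algebra `(GH, opG)` on `H` (with unit `ηG`) and the free `I_{GH}`-algebra
`(IX, opI)` on `X` (with unit `ηI`), the functorial algebra `⟨GH, IX, opG, opI⟩`
with units `(ηG, ηI)` is the free functorial algebra on `(H, X)`. -/
theorem free_functorial_algebra_characterization [LocallyFinitelyPresentable C]
    (Sg Gg : C ⥤ C)
    (hS : Nonempty (PreservesFilteredColimits Sg))
    (hG : Nonempty (PreservesFilteredColimits Gg))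
    (H : C ⥤ C) (hH : Nonempty (PreservesFilteredColimits H)) (X : C)
    -- the free G-algebra on H (among finitary endofunctors)
    (GH : C ⥤ C) (hGH : Nonempty (PreservesFilteredColimits GH))
    (opG : Gobj Sg Gg GH ⟶ GH) (ηG : H ⟶ GH)
    (hfreeG : ∀ K : C ⥤ C, Nonempty (PreservesFilteredColimits K) →
      ∀ (γ : Gobj Sg Gg K ⟶ K) (σ : H ⟶ K),
        ∃! σ' : GH ⟶ K, ηG ≫ σ' = σ ∧ opG ≫ σ' = Gmap Sg Gg σ' ≫ γ)
    -- the free I_{GH}-algebra on X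
    (IX : C) (opI : Sg.obj IX ⨿ Gg.obj (GH.obj IX) ⟶ IX) (ηI : X ⟶ IX)
    (hfreeI : ∀ (Y : C) (δ : Sg.obj Y ⨿ Gg.obj (GH.obj Y) ⟶ Y) (f : X ⟶ Y),
      ∃! f' : IX ⟶ Y, ηI ≫ f' = f ∧
        opI ≫ f' = coprod.map (Sg.map f') (Gg.map (GH.map f')) ≫ δ) :
    ∀ (B : FnAlg Sg Gg) (σ : H ⟶ B.H) (f : X ⟶ B.X),
      ∃! p : FnAlgHom Sg Gg ⟨GH, hGH, IX, opG, opI⟩ B,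
        ηG ≫ p.σ = σ ∧ ηI ≫ p.f = f := by
  intro B σ f
  obtain ⟨σ', ⟨hη, hop⟩, huniq⟩ := hfreeG B.H B.fin B.algG σ
  have key : ∀ g : IX ⟶ B.X,
      coprod.map (Sg.map g) (Gg.map (GH.map g)) ≫
        (coprod.map (𝟙 _) (Gg.map (σ'.app B.X)) ≫ B.algI) =
      coprod.map (Sg.map g) (Gg.map (σ'.app IX ≫ B.H.map g)) ≫ B.algI := by
    intro g
    rw [← Category.assoc, coprod.map_map, Category.comp_id, ← Gg.map_comp,
      σ'.naturality]
  obtain ⟨f', ⟨hηI, hopI⟩, huniqI⟩ :=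
    hfreeI B.X (coprod.map (𝟙 _) (Gg.map (σ'.app B.X)) ≫ B.algI) f
  refine ⟨⟨σ', f', hop, ?_⟩, ⟨hη, hηI⟩, ?_⟩
  · rw [hopI, key]
  · rintro p ⟨hpη, hpηI⟩
    have hσ : p.σ = σ' := huniq p.σ ⟨hpη, p.commG⟩
    have hf : p.f = f' := by
      refine huniqI p.f ⟨hpηI, ?_⟩
      rw [key, ← hσ]
      exact p.commI
    cases p
    cases hσ
    cases hf
    rfl
end

section
/- For endofunctors X ↦ A + F X, if the initial algebra of Y ↦ (A + F(−)) is computed via the 'diagonal rule', then the initial algebra P of G H = Id + Σ∘H + Γ∘H∘H in Endo_f(C) is isomorphic, as an endofunctor, to the free monad (Σ + Γ ∘ P)* on the endofunctor Σ + Γ ∘ P, i.e., P ≅ μX.(Id + (Σ + Γ∘P) ∘ X). -/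
open CategoryTheory CategoryTheory.Limits

universe v u

variable {C : Type u} [Category.{v} C]

/-- The initial algebra `P` of `G H = Id + Σ∘H + Γ∘H∘H` on finitary endofunctors is
isomorphic, as an endofunctor, to the free monad `(Σ + Γ∘P)*`, i.e. to the initial
algebra `Q` of `X ↦ Id + (Σ + Γ∘P) ∘ X = Id + Σ∘X + Γ∘P∘X` ("diagonal rule"). -/
theorem initial_grammar_algebra_iso_free_monad [LocallyFinitelyPresentable C]
    (Sg Gg : C ⥤ C)
    (hS : Nonempty (PreservesFilteredColimits Sg))
    (hG : Nonempty (PreservesFilteredColimits Gg))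
    -- P, the initial G-algebra among finitary endofunctors
    (P : C ⥤ C) (hP : Nonempty (PreservesFilteredColimits P))
    (ιP : Gobj Sg Gg P ≅ P)
    (hPinit : ∀ H : C ⥤ C, Nonempty (PreservesFilteredColimits H) →
      ∀ α : Gobj Sg Gg H ⟶ H,
        ∃! h : P ⟶ H, ιP.hom ≫ h = Gmap Sg Gg h ≫ α)
    -- Q, the initial algebra of X ↦ Id + Σ∘X + Γ∘P∘X among finitary endofunctors
    (Q : C ⥤ C) (hQ : Nonempty (PreservesFilteredColimits Q))
    (ιQ : (𝟭 C ⨿ ((Q ⋙ Sg) ⨿ (Q ⋙ P ⋙ Gg))) ≅ Q)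
    (hQinit : ∀ H : C ⥤ C, Nonempty (PreservesFilteredColimits H) →
      ∀ α : (𝟭 C ⨿ ((H ⋙ Sg) ⨿ (H ⋙ P ⋙ Gg))) ⟶ H,
        ∃! h : Q ⟶ H,
          ιQ.hom ≫ h =
            coprod.map (𝟙 (𝟭 C))
              (coprod.map (Functor.whiskerRight h Sg) (Functor.whiskerRight h (P ⋙ Gg))) ≫ α) :
    Nonempty (P ≅ Q) := by
  -- `h : Q ⟶ P`, induced by the `Q`-style algebra structure `ιP.hom` on `P`.
  obtain ⟨h, hh, -⟩ := hQinit P hP ιP.hom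
  -- `k : P ⟶ Q`, induced by the `G`-algebra structure on `Q`.
  obtain ⟨k, hk, -⟩ :=
    hPinit Q hQ
      ((coprod.map (𝟙 (𝟭 C)) (coprod.map (𝟙 _) (Functor.whiskerLeft Q (Functor.whiskerRight h Gg)))
        : Gobj Sg Gg Q ⟶ _) ≫ ιQ.hom)
  have hcompapp : ∀ {A B : C ⥤ C} (a : A ⟶ B) (X : C),
      (a ◫ a).app X = a.app (A.obj X) ≫ B.map (a.app X) := by
    intro A B a X; simp [NatTrans.hcomp_app]
  -- key component computation for `k ≫ h`
  have key1 :
      Functor.whiskerRight (k ◫ k) Gg ≫ Functor.whiskerLeft Q (Functor.whiskerRight h Gg) ≫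
        Functor.whiskerRight h (P ⋙ Gg) = Functor.whiskerRight ((k ≫ h) ◫ (k ≫ h)) Gg := by
    ext X
    simp only [NatTrans.comp_app, Functor.whiskerRight_app, Functor.whiskerLeft_app, Functor.comp_map,
      ← Gg.map_comp, Category.assoc, hcompapp, NatTrans.comp_app]
    congr 1
    rw [show Q.map (k.app X) ≫ h.app (Q.obj X) ≫ P.map (h.app X)
        = (Q.map (k.app X) ≫ h.app (Q.obj X)) ≫ P.map (h.app X) by rw [Category.assoc],
      h.naturality (k.app X), Category.assoc, ← P.map_comp]
  have eSg1 : (Functor.whiskerRight k Sg ≫ 𝟙 (Q ⋙ Sg)) ≫ Functor.whiskerRight h Sg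
      = Functor.whiskerRight (k ≫ h) Sg := by
    rw [Category.comp_id, ← Functor.whiskerRight_comp]
  have comp1 : (Gmap Sg Gg k ≫
        coprod.map (𝟙 (𝟭 C)) (coprod.map (𝟙 (Q ⋙ Sg)) (Functor.whiskerLeft Q (Functor.whiskerRight h Gg)))) ≫
        coprod.map (𝟙 (𝟭 C)) (coprod.map (Functor.whiskerRight h Sg) (Functor.whiskerRight h (P ⋙ Gg)))
      = Gmap Sg Gg (k ≫ h) := by
    unfold Gmap Gobj
    rw [coprod.map_map, coprod.map_map, coprod.map_map, coprod.map_map,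
      eSg1]
    rw [← Category.assoc] at key1
    rw [key1]
    simp
  have kh : k ≫ h = 𝟙 P := by
    obtain ⟨e, he, heuniq⟩ := hPinit P hP ιP.hom
    have h1 : k ≫ h = e := by
      apply heuniq
      erw [← Category.assoc, hk, Category.assoc, Category.assoc, hh, ← Category.assoc,
        ← Category.assoc, comp1]
      rfl
    have h2 : 𝟙 P = e := by
      apply heuniq
      have hcid : Functor.whiskerRight (𝟙 P ◫ 𝟙 P) Gg = 𝟙 (P ⋙ P ⋙ Gg) := by
        ext X; simp [NatTrans.hcomp_app]
      have : Gmap Sg Gg (𝟙 P) = 𝟙 (Gobj Sg Gg P) := by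
        unfold Gmap Gobj
        rw [hcid, Functor.whiskerRight_id', coprod.map_id_id, coprod.map_id_id]
      rw [this, Category.comp_id, Category.id_comp]
    rw [h1, h2]
  have hkh : ∀ Y : C, k.app Y ≫ h.app Y = 𝟙 (P.obj Y) := by
    intro Y
    have := congrArg (fun t => t.app Y) kh
    simpa using this
  -- key component computation for `h ≫ k`
  have key2 :
      Functor.whiskerRight h (P ⋙ Gg) ≫ Functor.whiskerRight (k ◫ k) Gg ≫
        Functor.whiskerLeft Q (Functor.whiskerRight h Gg) = Functor.whiskerRight (h ≫ k) (P ⋙ Gg) := by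
    ext X
    simp only [NatTrans.comp_app, Functor.whiskerRight_app, Functor.whiskerLeft_app, Functor.comp_map,
      ← Gg.map_comp, Category.assoc, hcompapp, NatTrans.comp_app]
    congr 1
    rw [show P.map (h.app X) ≫ k.app (P.obj X) ≫ Q.map (k.app X) ≫ h.app (Q.obj X)
        = (P.map (h.app X) ≫ k.app (P.obj X)) ≫ (Q.map (k.app X) ≫ h.app (Q.obj X)) by
        simp [Category.assoc],
      k.naturality (h.app X), h.naturality (k.app X)]
    rw [Category.assoc, show Q.map (h.app X) ≫ h.app (P.obj X) ≫ P.map (k.app X)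
        = (Q.map (h.app X) ≫ h.app (P.obj X)) ≫ P.map (k.app X) by rw [Category.assoc],
      h.naturality (h.app X), ← Category.assoc, ← Category.assoc, hkh,
      Category.id_comp, ← P.map_comp]
  have eSg2 : (Functor.whiskerRight h Sg ≫ Functor.whiskerRight k Sg) ≫ 𝟙 (Q ⋙ Sg)
      = Functor.whiskerRight (h ≫ k) Sg := by
    rw [Category.comp_id, ← Functor.whiskerRight_comp]
  have comp2 : (coprod.map (𝟙 (𝟭 C))
        (coprod.map (Functor.whiskerRight h Sg) (Functor.whiskerRight h (P ⋙ Gg))) ≫ Gmap Sg Gg k) ≫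
        coprod.map (𝟙 (𝟭 C)) (coprod.map (𝟙 (Q ⋙ Sg)) (Functor.whiskerLeft Q (Functor.whiskerRight h Gg)))
      = coprod.map (𝟙 (𝟭 C))
          (coprod.map (Functor.whiskerRight (h ≫ k) Sg) (Functor.whiskerRight (h ≫ k) (P ⋙ Gg))) := by
    unfold Gmap Gobj
    rw [coprod.map_map, coprod.map_map, coprod.map_map, coprod.map_map,
      eSg2]
    rw [← Category.assoc] at key2
    rw [key2]
    simp
  have hk' : h ≫ k = 𝟙 Q := by
    obtain ⟨e, he, heuniq⟩ := hQinit Q hQ ιQ.hom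
    have h1 : h ≫ k = e := by
      apply heuniq
      erw [← Category.assoc, hh, Category.assoc, hk, ← Category.assoc, ← Category.assoc,
        comp2]
    have h2 : 𝟙 Q = e := by
      apply heuniq
      simp
    rw [h1, h2]
  exact ⟨⟨k, h, kh, hk'⟩⟩
end

section
/- Mendler-style adjoint folds: given an adjunction L ⊣ R : D → C, an endofunctor G : D → D with initial algebra (μG, in), an object B of C, and a natural transformation Φ : C(L −, B) ⟹ C(L(G −), B) (natural in the D-variable), there exists a unique morphism x : L(μG) → B satisfying x = Φ_{μG}(x) ∘ L(in⁻¹); moreover its adjoint transpose satisfies ⌊x⌋ = ⦇ ⌊Φ_{R B}(ε_B)⌋ ⦈, the catamorphism to the G-algebra on R B with structure map the transpose of Φ_{R B}(ε_B). -/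
open CategoryTheory CategoryTheory.Limits

universe v₁ v₂ u₁ u₂

/-- Mendler-style adjoint folds: given an adjunction `L ⊣ R`, an endofunctor `G` on
the domain of `R`'s codomain... — concretely: `L : D ⥤ E` with right adjoint `R`,
`G : D ⥤ D` with initial algebra `(M, in)` (whose structure map is invertible, by
Lambek's lemma), an object `B : E`, and a natural transformation
`Φ : (L.obj − ⟶ B) ⟹ (L.obj (G.obj −) ⟶ B)` (naturality is `hΦ`), there is a
unique `x : L.obj M.a ⟶ B` with `x = Φ(x) ∘ L(in⁻¹)`; moreover any such `x` has
adjoint transpose the catamorphism to the `G`-algebra on `R.obj B` whose structure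
map is the transpose of `Φ (R.obj B) (ε_B)`. -/
theorem mendler_adjoint_fold {D : Type u₁} {E : Type u₂}
    [Category.{v₁} D] [Category.{v₂} E]
    (L : D ⥤ E) (R : E ⥤ D) (adj : L ⊣ R)
    (G : D ⥤ D) (M : Endofunctor.Algebra G) (hM : IsInitial M) [IsIso M.str]
    (B : E)
    (Φ : ∀ X : D, (L.obj X ⟶ B) → (L.obj (G.obj X) ⟶ B))
    (hΦ : ∀ {X Y : D} (g : Y ⟶ X) (t : L.obj X ⟶ B),
      Φ Y (L.map g ≫ t) = L.map (G.map g) ≫ Φ X t) :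
    (∃! x : L.obj M.a ⟶ B, x = L.map (inv M.str) ≫ Φ M.a x) ∧
    ∀ x : L.obj M.a ⟶ B, x = L.map (inv M.str) ≫ Φ M.a x →
      (adj.homEquiv M.a B) x =
        (hM.to ⟨R.obj B, (adj.homEquiv (G.obj (R.obj B)) B)
          (Φ (R.obj B) (adj.counit.app B))⟩).f := by
  set α : G.obj (R.obj B) ⟶ R.obj B :=
    (adj.homEquiv (G.obj (R.obj B)) B) (Φ (R.obj B) (adj.counit.app B)) with hα
  set A : Endofunctor.Algebra G := ⟨R.obj B, α⟩ with hA
  have hrep : ∀ x : L.obj M.a ⟶ B,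
      Φ M.a x = L.map (G.map ((adj.homEquiv M.a B) x)) ≫ Φ (R.obj B) (adj.counit.app B) := by
    intro x
    conv_lhs => rw [← (adj.homEquiv M.a B).symm_apply_apply x, adj.homEquiv_counit]
    rw [hΦ]
  have key : ∀ x : L.obj M.a ⟶ B, (x = L.map (inv M.str) ≫ Φ M.a x) ↔
      (G.map ((adj.homEquiv M.a B) x) ≫ α = M.str ≫ (adj.homEquiv M.a B) x) := by
    intro x
    have h1 : (x = L.map (inv M.str) ≫ Φ M.a x) ↔ (L.map M.str ≫ x = Φ M.a x) := by
      constructor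
      · intro hx
        conv_lhs => rw [hx]
        rw [← Category.assoc, ← L.map_comp, IsIso.hom_inv_id, L.map_id, Category.id_comp]
      · intro hx
        rw [← hx, ← Category.assoc, ← L.map_comp, IsIso.inv_hom_id, L.map_id, Category.id_comp]
    rw [h1, hrep]
    constructor
    · intro hx
      have := congrArg (adj.homEquiv (G.obj M.a) B) hx
      rwa [adj.homEquiv_naturality_left, adj.homEquiv_naturality_left, ← hα, eq_comm] at this
    · intro hx
      apply (adj.homEquiv (G.obj M.a) B).injective
      rw [adj.homEquiv_naturality_left, adj.homEquiv_naturality_left, ← hα, ← hx]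
  have huniq : ∀ x : L.obj M.a ⟶ B, x = L.map (inv M.str) ≫ Φ M.a x →
      (adj.homEquiv M.a B) x = (hM.to A).f := by
    intro x hx
    have hm : (⟨(adj.homEquiv M.a B) x, (key x).mp hx⟩ : M ⟶ A) = hM.to A :=
      hM.hom_ext _ _
    exact congrArg Endofunctor.Algebra.Hom.f hm
  constructor
  · refine ⟨(adj.homEquiv M.a B).symm (hM.to A).f, ?_, ?_⟩
    · show _ = _
      rw [key]
      simp only [Equiv.apply_symm_apply]
      exact (hM.to A).h
    · intro y hy
      apply (adj.homEquiv M.a B).injective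
      rw [huniq y hy, Equiv.apply_symm_apply]
  · exact huniq
end
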